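/- Let 1 < α < 2, κ > 0, and let γ > 0 satisfy γ = ∫_{[−1,1]\{0}} (e^{−γu} − 1 + γu)·κ·|u|^{-(1+α)} du. Define F : ℝ → ℝ by F(ξ) = 1 − e^{−γξ} for ξ > 0 and F(ξ) = 0 for ξ ≤ 0. Then: (i) F(ξ) = 0 for all ξ ≤ 0; (ii) F(ξ) → 1 as ξ → ∞; (iii) for every ξ > 1, F is differentiable at ξ, the function u ↦ (F(ξ+u) − F(ξ) − F'(ξ)u)·κ·|u|^{-(1+α)} is Lebesgue integrable on [−1,1] \ {0}, and F'(ξ) + ∫_{[−1,1]\{0}} (F(ξ+u) − F(ξ) − F'(ξ)u)·κ·|u|^{-(1+α)} du = 0. -/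

import Mathlib

open MeasureTheory

/-- The boundary layer function `F(ξ) = 1 - e^{-γξ}` (for `ξ > 0`, `F = 0` for `ξ ≤ 0`)
satisfies the boundary condition, the matching condition, and (for `ξ > 1`) the layer
equation `F'(ξ) + ∫ (F(ξ+u) - F(ξ) - F'(ξ)u) ν(du) = 0` with the truncated Lévy measure. -/
theorem boundary_layer_left (α κ γ : ℝ) (hα1 : 1 < α) (hα2 : α < 2) (hκ : 0 < κ)
    (hγ : 0 < γ)
    (hγeq : γ = ∫ u in (Set.Icc (-1 : ℝ) 1 \ {0}),
      (Real.exp (-γ * u) - 1 + γ * u) * (κ * |u| ^ (-(1 + α)))) :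
    let F : ℝ → ℝ := fun ξ => if 0 < ξ then 1 - Real.exp (-γ * ξ) else 0
    (∀ ξ : ℝ, ξ ≤ 0 → F ξ = 0) ∧
    Filter.Tendsto F Filter.atTop (nhds 1) ∧
    ∀ ξ : ℝ, 1 < ξ →
      DifferentiableAt ℝ F ξ ∧
      Integrable (fun u => (F (ξ + u) - F ξ - deriv F ξ * u) * (κ * |u| ^ (-(1 + α))))
        ((volume : Measure ℝ).restrict (Set.Icc (-1 : ℝ) 1 \ {0})) ∧
      deriv F ξ + ∫ u in (Set.Icc (-1 : ℝ) 1 \ {0}),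
        (F (ξ + u) - F ξ - deriv F ξ * u) * (κ * |u| ^ (-(1 + α))) = 0 := by
  intro F
  set g : ℝ → ℝ := fun u => (Real.exp (-γ * u) - 1 + γ * u) * (κ * |u| ^ (-(1 + α)))
    with hg_def
  set S : Set ℝ := Set.Icc (-1 : ℝ) 1 \ {0} with hS_def
  have hSmeas : MeasurableSet S := measurableSet_Icc.diff (measurableSet_singleton 0)
  -- integrability of g
  have hg : IntegrableOn g S volume := by
    by_contra h
    rw [integral_undef h] at hγeq
    exact absurd hγeq (ne_of_gt hγ)
  -- smooth model function
  have hsmooth : ∀ x : ℝ, HasDerivAt (fun y : ℝ => 1 - Real.exp (-γ * y))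
      (γ * Real.exp (-γ * x)) x := by
    intro x
    have h1 : HasDerivAt (fun y : ℝ => -γ * y) (-γ) x := by
      simpa using (hasDerivAt_id x).const_mul (-γ)
    have h2 := h1.exp
    have h3 := h2.const_sub 1
    rw [show γ * Real.exp (-γ * x) = -(Real.exp (-γ * x) * -γ) by ring]
    exact h3
  refine ⟨?_, ?_, ?_⟩
  · intro ξ hξ
    simp only [F, if_neg (not_lt.mpr hξ)]
  · have h1 : Filter.Tendsto (fun ξ : ℝ => 1 - Real.exp (-γ * ξ)) Filter.atTop (nhds 1) := by
      have h2 : Filter.Tendsto (fun ξ : ℝ => -γ * ξ) Filter.atTop Filter.atBot := by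
        exact Filter.tendsto_id.const_mul_atTop_of_neg (by linarith)
      have h3 := Real.tendsto_exp_atBot.comp h2
      simpa using (tendsto_const_nhds (x := (1:ℝ))).sub h3
    refine h1.congr' ?_
    filter_upwards [Filter.eventually_gt_atTop (0:ℝ)] with ξ hξ
    simp [F, if_pos hξ]
  · intro ξ hξ
    -- F agrees with the smooth function near ξ
    have hEq : F =ᶠ[nhds ξ] fun y => 1 - Real.exp (-γ * y) := by
      filter_upwards [IsOpen.mem_nhds isOpen_Ioi (show ξ ∈ Set.Ioi (0:ℝ) by
        exact Set.mem_Ioi.mpr (by linarith))] with y hy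
      simp [F, if_pos (Set.mem_Ioi.mp hy)]
    have hdiff : DifferentiableAt ℝ F ξ :=
      ((hsmooth ξ).differentiableAt).congr_of_eventuallyEq hEq
    have hderiv : deriv F ξ = γ * Real.exp (-γ * ξ) := by
      rw [hEq.deriv_eq, (hsmooth ξ).deriv]
    -- pointwise identity on S
    have hpt : ∀ u ∈ S, (F (ξ + u) - F ξ - deriv F ξ * u) * (κ * |u| ^ (-(1 + α)))
        = (-(Real.exp (-γ * ξ))) * g u := by
      intro u hu
      obtain ⟨⟨hu1, hu2⟩, -⟩ := hu
      have hpos : 0 < ξ + u := by linarith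
      have hξpos : (0:ℝ) < ξ := by linarith
      have hFu : F (ξ + u) = 1 - Real.exp (-γ * (ξ + u)) := by simp [F, if_pos hpos]
      have hFξ : F ξ = 1 - Real.exp (-γ * ξ) := by simp [F, if_pos hξpos]
      have hexp : Real.exp (-γ * (ξ + u)) = Real.exp (-γ * ξ) * Real.exp (-γ * u) := by
        rw [← Real.exp_add]; ring_nf
      rw [hFu, hFξ, hderiv, hexp, hg_def]
      ring
    have haeEq : (fun u => (F (ξ + u) - F ξ - deriv F ξ * u) * (κ * |u| ^ (-(1 + α))))
        =ᶠ[ae (volume.restrict S)] fun u => (-(Real.exp (-γ * ξ))) * g u := by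
      rw [Filter.eventuallyEq_iff_exists_mem]
      exact ⟨S, self_mem_ae_restrict hSmeas, hpt⟩
    have hint : Integrable (fun u => (-(Real.exp (-γ * ξ))) * g u) (volume.restrict S) :=
      hg.const_mul _
    refine ⟨hdiff, hint.congr haeEq.symm, ?_⟩
    have : ∫ u in S, (F (ξ + u) - F ξ - deriv F ξ * u) * (κ * |u| ^ (-(1 + α)))
        = ∫ u in S, (-(Real.exp (-γ * ξ))) * g u := integral_congr_ae haeEq
    rw [this, integral_const_mul, ← hγeq, hderiv]
    ring
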